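/- Let (X,μ) be a connected non-oriented weighted graph with bounded geometry and bounded row sums, with edge set E(X) and convergence parameter R_μ. Let (p_n) be a sequence in [0,1] with ∑_n (1 − p_n) < ∞, and let (ω_n)_{n∈ℕ} be independent percolation configurations, ω_n distributed as Bernoulli bond percolation on E(X) with parameter p_n. Then, almost surely, λ_s(Y^a_{ω_n}) := inf_{x∈X} r_{ω_n}(x) converges to R_μ as n → ∞. -/

import Mathlib

open Filter MeasureTheory ProbabilityTheory
open scoped ENNReal NNReal

/-- `n`-step weights (matrix powers) of a weight kernel `μ` on a countable set. -/
noncomputable def matPow {X : Type*} [DecidableEq X] (μ : X → X → ℝ≥0∞) :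
    ℕ → X → X → ℝ≥0∞
  | 0, x, y => if x = y then 1 else 0
  | n + 1, x, y => ∑' z, matPow μ n x z * μ z y

/-- `(X, μ)` has bounded row sums. -/
def bddRows {X : Type*} (μ : X → X → ℝ≥0∞) : Prop :=
  ∃ K : ℝ≥0∞, K ≠ ⊤ ∧ ∀ x, ∑' y, μ x y ≤ K

/-- `(X, μ)` is connected. -/
def connectedW {X : Type*} [DecidableEq X] (μ : X → X → ℝ≥0∞) : Prop :=
  ∀ x y, ∃ n, 0 < n ∧ 0 < matPow μ n x y

/-- `limsup_n (μ^{(n)}(x,y))^{1/n}`, the reciprocal of the convergence parameter. -/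
noncomputable def lsRoot {X : Type*} [DecidableEq X] (μ : X → X → ℝ≥0∞) (x y : X) : ℝ≥0∞ :=
  Filter.limsup (fun n : ℕ => matPow μ n x y ^ (n : ℝ)⁻¹) Filter.atTop

/-- The convergence parameter `R = 1 / limsup_n (μ^{(n)}(x,y))^{1/n}`. -/
noncomputable def convR {X : Type*} [DecidableEq X] (μ : X → X → ℝ≥0∞) (x y : X) : ℝ≥0∞ :=
  (lsRoot μ x y)⁻¹

open Classical in
/-- Restriction of a weight kernel to a subset (extended by `0`). -/
noncomputable def restrictW {X : Type*} (μ : X → X → ℝ≥0∞) (A : Set X) : X → X → ℝ≥0∞ :=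
  fun x y => if x ∈ A ∧ y ∈ A then μ x y else 0
/-- `e` is an edge of the weighted graph `(X, μ)`. -/
def IsEdgeW {X : Type*} (μ : X → X → ℝ≥0∞) (e : Sym2 X) : Prop :=
  ∃ x y : X, e = s(x, y) ∧ 0 < μ x y

open Classical in
/-- The weight kernel obtained from `μ` by keeping only the edges that are open in the
percolation configuration `c`. -/
noncomputable def percW {X : Type*} (μ : X → X → ℝ≥0∞)
    (c : {e : Sym2 X // IsEdgeW μ e} → Bool) : X → X → ℝ≥0∞ := fun x y =>
  if h : IsEdgeW μ s(x, y) then (if c ⟨s(x, y), h⟩ then μ x y else 0) else 0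

/-- The open cluster of `x` in the configuration `c`: all vertices reachable from `x`
through open edges. -/
def clusterW {X : Type*} [DecidableEq X] (μ : X → X → ℝ≥0∞)
    (c : {e : Sym2 X // IsEdgeW μ e} → Bool) (x : X) : Set X :=
  {y : X | ∃ n : ℕ, 0 < matPow (percW μ c) n x y}

/-- `(X, μ)` is non-oriented: `μ(x,y) > 0` iff `μ(y,x) > 0`. -/
def nonOrientedW {X : Type*} (μ : X → X → ℝ≥0∞) : Prop :=
  ∀ x y : X, 0 < μ x y ↔ 0 < μ y x

/-- `(X, μ)` has bounded geometry: uniformly bounded number of neighbours. -/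
def bddGeometryW {X : Type*} (μ : X → X → ℝ≥0∞) : Prop :=
  ∃ D : ℕ, ∀ x : X, ({y : X | 0 < μ x y}).Finite ∧ ({y : X | 0 < μ x y}).ncard ≤ D



section Aux

variable {X : Type*} [DecidableEq X] {μ ν : X → X → ℝ≥0∞}

lemma matPow_mono (h : ∀ x y, ν x y ≤ μ x y) (n : ℕ) (x y : X) :
    matPow ν n x y ≤ matPow μ n x y := by
  induction n generalizing y with
  | zero => simp [matPow]
  | succ n ih =>
    simp only [matPow]
    exact ENNReal.tsum_le_tsum fun z => mul_le_mul' (ih z) (h z y)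

lemma matPow_add (m n : ℕ) (x y : X) :
    matPow μ (m + n) x y = ∑' z, matPow μ m x z * matPow μ n z y := by
  induction n generalizing y with
  | zero =>
    simp only [Nat.add_zero, matPow, mul_ite, mul_one, mul_zero]
    rw [tsum_eq_single y (by intro z hz; simp [hz])]
    simp
  | succ n ih =>
    have : m + (n+1) = (m+n) + 1 := by omega
    rw [this]
    simp only [matPow]
    calc (∑' z, matPow μ (m+n) x z * μ z y)
        = ∑' z, (∑' w, matPow μ m x w * matPow μ n w z) * μ z y := by
          refine tsum_congr fun z => by rw [ih]
      _ = ∑' z, ∑' w, matPow μ m x w * matPow μ n w z * μ z y := by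
          refine tsum_congr fun z => by rw [← ENNReal.tsum_mul_right]
      _ = ∑' w, ∑' z, matPow μ m x w * (matPow μ n w z * μ z y) := by
          rw [ENNReal.tsum_comm]; exact tsum_congr fun w => tsum_congr fun z => by ring
      _ = ∑' w, matPow μ m x w * ∑' z, matPow μ n w z * μ z y := by
          refine tsum_congr fun w => by rw [ENNReal.tsum_mul_left]

lemma le_matPow_add (m n : ℕ) (x z y : X) :
    matPow μ m x z * matPow μ n z y ≤ matPow μ (m + n) x y := by
  rw [matPow_add]; exact ENNReal.le_tsum z

lemma matPow_rowsum_le {K : ℝ≥0∞} (hK : ∀ x, ∑' y, μ x y ≤ K) (n : ℕ) (x : X) :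
    ∑' y, matPow μ n x y ≤ K ^ n := by
  induction n with
  | zero =>
    simp only [matPow, pow_zero]
    rw [tsum_eq_single x (by intro z hz; simp [Ne.symm hz])]
    simp
  | succ n ih =>
    simp only [matPow]
    rw [ENNReal.tsum_comm]
    calc (∑' z, ∑' y, matPow μ n x z * μ z y)
        = ∑' z, matPow μ n x z * ∑' y, μ z y := by
          refine tsum_congr fun z => by rw [ENNReal.tsum_mul_left]
      _ ≤ ∑' z, matPow μ n x z * K := ENNReal.tsum_le_tsum fun z => mul_le_mul' le_rfl (hK z)
      _ = (∑' z, matPow μ n x z) * K := ENNReal.tsum_mul_right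
      _ ≤ K ^ n * K := mul_le_mul' ih le_rfl
      _ = K ^ (n+1) := by ring

lemma matPow_le_pow {K : ℝ≥0∞} (hK : ∀ x, ∑' y, μ x y ≤ K) (n : ℕ) (x y : X) :
    matPow μ n x y ≤ K ^ n :=
  le_trans (ENNReal.le_tsum y) (matPow_rowsum_le hK n x)

lemma matPow_pos_exists {n : ℕ} {x y : X} (h : 0 < matPow μ (n+1) x y) :
    ∃ z, 0 < matPow μ n x z ∧ 0 < μ z y := by
  simp only [matPow] at h
  by_contra hc
  push_neg at hc
  have : ∀ z, matPow μ n x z * μ z y = 0 := by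
    intro z
    rcases (eq_zero_or_pos (matPow μ n x z)) with h0 | h0
    · simp [h0]
    · have := hc z h0
      simp [le_antisymm this zero_le]
  rw [ENNReal.tsum_eq_zero.2 this] at h
  exact lt_irrefl _ h

lemma pow_rpow_inv_natCast' (x : ℝ≥0∞) {n : ℕ} (hn : n ≠ 0) :
    (x ^ n) ^ ((n : ℝ))⁻¹ = x := by
  rw [← ENNReal.rpow_natCast, ← ENNReal.rpow_mul,
    mul_inv_cancel₀ (by exact_mod_cast hn), ENNReal.rpow_one]

lemma eventually_rpow_lower {c t t' : ℝ≥0∞} (hc : c ≠ 0) (ht : t ≠ ⊤) (ht' : t' < t) (k : ℕ) :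
    ∀ᶠ n : ℕ in atTop, t' ≤ (c * t ^ n) ^ ((n + k : ℕ) : ℝ)⁻¹ := by
  rcases eq_or_ne t' 0 with rfl | ht'0
  · exact Eventually.of_forall fun n => zero_le
  have ht0 : t ≠ 0 := fun h => absurd (h ▸ ht') (by simp)
  have hr : t' / t < 1 := (ENNReal.div_lt_iff (Or.inl ht0) (Or.inl ht)).2 (by simpa using ht')
  have hM : (0:ℝ≥0∞) < c / t' ^ k := by
    apply ENNReal.div_pos hc
    exact ENNReal.pow_ne_top (ne_top_of_lt (lt_of_lt_of_le ht' (le_top)))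
  have := (ENNReal.tendsto_pow_atTop_nhds_zero_of_lt_one hr).eventually_lt_const hM
  filter_upwards [this, eventually_ge_atTop 1] with n hn hn1
  have ht'top : t' ≠ ⊤ := ne_top_of_lt (lt_of_lt_of_le ht' le_top)
  have key : t' ^ (n + k) ≤ c * t ^ n := by
    have h1 : (t' / t) ^ n * t' ^ k ≤ (c / t' ^ k) * t' ^ k :=
      mul_le_mul' hn.le le_rfl
    have h2 : (c / t' ^ k) * t' ^ k = c := by
      rw [ENNReal.div_mul_cancel (by positivity) (ENNReal.pow_ne_top ht'top)]
    have h3 : (t' / t) ^ n * t' ^ k * t ^ n = t' ^ (n + k) := by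
      have hdp : (t' / t) ^ n = t' ^ n / t ^ n := by
        rw [div_eq_mul_inv, mul_pow, ← ENNReal.inv_pow, ← div_eq_mul_inv]
      rw [hdp, mul_right_comm,
        ENNReal.div_mul_cancel (by positivity) (ENNReal.pow_ne_top ht), ← pow_add]
    calc t' ^ (n + k) = (t' / t) ^ n * t' ^ k * t ^ n := h3.symm
      _ ≤ c * t ^ n := by rw [h2] at h1; exact mul_le_mul' h1 le_rfl
  calc t' = (t' ^ (n + k)) ^ (((n + k : ℕ) : ℝ))⁻¹ :=
        (pow_rpow_inv_natCast' t' (by omega : n + k ≠ 0)).symm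
    _ ≤ (c * t ^ n) ^ (((n + k : ℕ) : ℝ))⁻¹ := ENNReal.rpow_le_rpow key (by positivity)

lemma le_lsRoot (x : X) {m : ℕ} (hm : m ≠ 0) :
    (matPow μ m x x) ^ ((m : ℝ))⁻¹ ≤ lsRoot μ x x := by
  set c := matPow μ m x x with hc
  have hsuper : ∀ k : ℕ, c ^ (k+1) ≤ matPow μ ((k+1) * m) x x := by
    intro k
    induction k with
    | zero => simp [hc]
    | succ k ih =>
      have h1 : matPow μ ((k+1)*m) x x * matPow μ m x x ≤ matPow μ ((k+1)*m + m) x x :=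
        le_matPow_add _ _ _ _ _
      have h2 : (k+1)*m + m = (k+2)*m := by ring
      calc c ^ (k+2) = c ^ (k+1) * c := by ring
        _ ≤ matPow μ ((k+1)*m) x x * matPow μ m x x := mul_le_mul' ih le_rfl
        _ ≤ matPow μ ((k+2)*m) x x := h2 ▸ h1
  apply le_limsup_of_frequently_le'
  rw [frequently_atTop]
  intro N
  refine ⟨(N+1) * m, ?_, ?_⟩
  · calc N ≤ N + 1 := by omega
      _ ≤ (N+1) * m := Nat.le_mul_of_pos_right _ (Nat.pos_of_ne_zero hm)
  · have h1 : (c ^ (N+1)) ^ (((N+1) * m : ℕ) : ℝ)⁻¹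
        ≤ (matPow μ ((N+1)*m) x x) ^ (((N+1) * m : ℕ) : ℝ)⁻¹ :=
      ENNReal.rpow_le_rpow (hsuper N) (by positivity)
    refine le_trans (le_of_eq ?_) h1
    rw [← ENNReal.rpow_natCast c (N+1), ← ENNReal.rpow_mul]
    congr 1
    have hm' : (m : ℝ) ≠ 0 := Nat.cast_ne_zero.2 hm
    have hN : ((N:ℝ)+1) ≠ 0 := by positivity
    push_cast
    field_simp

lemma lsRoot_le_K {K : ℝ≥0∞} (hK : ∀ x, ∑' y, μ x y ≤ K) (x y : X) :
    lsRoot μ x y ≤ K := by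
  apply limsup_le_of_le
  · isBoundedDefault
  · filter_upwards [eventually_ge_atTop 1] with n hn
    calc matPow μ n x y ^ ((n:ℝ))⁻¹ ≤ (K ^ n) ^ ((n:ℝ))⁻¹ :=
          ENNReal.rpow_le_rpow (matPow_le_pow hK n x y) (by positivity)
      _ = K := pow_rpow_inv_natCast' K (by omega)

private lemma le_of_dense_aux {A B : ℝ≥0∞} (h : ∀ t' t : ℝ≥0∞, t' < t → t < A → t' ≤ B) :
    A ≤ B := by
  by_contra hc
  push_neg at hc
  obtain ⟨t, htB, htA⟩ := exists_between hc
  obtain ⟨t', ht'B, ht't⟩ := exists_between htB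
  exact absurd (h t' t ht't htA) (not_le.2 ht'B)

lemma lsRoot_le_lsRoot {K : ℝ≥0∞} (hK : ∀ x, ∑' y, μ x y ≤ K)
    {x y z w : X} {a b : ℕ} (ha : 0 < matPow μ a z x) (hb : 0 < matPow μ b y w) :
    lsRoot μ x y ≤ lsRoot μ z w := by
  apply le_of_dense_aux
  intro t' t ht' ht
  set c := matPow μ a z x * matPow μ b y w with hcdef
  have hc0 : c ≠ 0 := by
    simp only [hcdef, mul_ne_zero_iff]
    exact ⟨ha.ne', hb.ne'⟩
  have httop : t ≠ ⊤ := ne_top_of_lt (lt_of_lt_of_le ht (lsRoot_le_K hK x y))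
  have hfreq : ∃ᶠ n in atTop, t < matPow μ n x y ^ ((n:ℝ))⁻¹ :=
    frequently_lt_of_lt_limsup (by isBoundedDefault) ht
  apply le_limsup_of_frequently_le _ (by isBoundedDefault)
  rw [frequently_atTop]
  intro N
  obtain ⟨n, hn⟩ := ((hfreq.and_eventually ((eventually_rpow_lower hc0 httop ht' (a+b)).and
    ((eventually_ge_atTop N).and (eventually_ge_atTop 1))))).exists
  obtain ⟨hroot, hlow, hnN, hn1⟩ := hn
  have hpow : t ^ n ≤ matPow μ n x y := by
    by_contra hcon
    push_neg at hcon
    have : matPow μ n x y ^ ((n:ℝ))⁻¹ ≤ (t ^ n) ^ ((n:ℝ))⁻¹ :=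
      ENNReal.rpow_le_rpow hcon.le (by positivity)
    rw [pow_rpow_inv_natCast' t (by omega)] at this
    exact absurd (lt_of_lt_of_le hroot this) (lt_irrefl t)
  refine ⟨a + (n + b), by omega, ?_⟩
  have hMlow : c * t ^ n ≤ matPow μ (a + (n + b)) z w := by
    calc c * t ^ n = matPow μ a z x * (t ^ n * matPow μ b y w) := by ring
      _ ≤ matPow μ a z x * (matPow μ n x y * matPow μ b y w) :=
          mul_le_mul' le_rfl (mul_le_mul' hpow le_rfl)
      _ ≤ matPow μ a z x * matPow μ (n + b) x w :=
          mul_le_mul' le_rfl (le_matPow_add n b x y w)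
      _ ≤ matPow μ (a + (n + b)) z w := le_matPow_add a (n+b) z x w
  have hidx : a + (n + b) = n + (a + b) := by omega
  calc t' ≤ (c * t ^ n) ^ ((n + (a+b) : ℕ) : ℝ)⁻¹ := hlow
    _ = (c * t ^ n) ^ ((a + (n + b) : ℕ) : ℝ)⁻¹ := by rw [hidx]
    _ ≤ (matPow μ (a + (n + b)) z w) ^ ((a + (n + b) : ℕ) : ℝ)⁻¹ :=
        ENNReal.rpow_le_rpow hMlow (by positivity)

lemma reach_finite (hbg : bddGeometryW μ) (n : ℕ) (x : X) :
    ({y | 0 < matPow μ n x y}).Finite := by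
  obtain ⟨D, hD⟩ := hbg
  induction n with
  | zero =>
    apply Set.Finite.subset (Set.finite_singleton x)
    intro y hy
    simp only [Set.mem_setOf_eq, matPow] at hy
    rcases eq_or_ne x y with rfl | h
    · exact Set.mem_singleton _
    · rw [if_neg h] at hy
      exact absurd hy (lt_irrefl 0)
  | succ n ih =>
    apply Set.Finite.subset (Set.Finite.biUnion ih (fun z _ => (hD z).1))
    intro y hy
    obtain ⟨z, hz1, hz2⟩ := matPow_pos_exists hy
    exact Set.mem_biUnion hz1 hz2

/-- The ball of radius `< m` around `x`. -/
def ballW (μ : X → X → ℝ≥0∞) (m : ℕ) (x : X) : Set X :=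
  ⋃ k ∈ Finset.range m, {z | 0 < matPow μ k x z}

lemma ballW_finite (hbg : bddGeometryW μ) (m : ℕ) (x : X) : (ballW μ m x).Finite :=
  Set.Finite.biUnion (Finset.range m).finite_toSet (fun k _ => reach_finite hbg k x)

lemma matPow_congr_on {A : Set X} (hν : ∀ x y, ν x y ≤ μ x y)
    (hA : ∀ z ∈ A, ∀ w, ν z w = μ z w) {m : ℕ} {x : X}
    (hball : ∀ k, k < m → {z | 0 < matPow μ k x z} ⊆ A) (y : X) :
    matPow ν m x y = matPow μ m x y := by
  induction m generalizing y with
  | zero => simp [matPow]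
  | succ n ih =>
    have ihn : ∀ y, matPow ν n x y = matPow μ n x y :=
      ih (fun k hk => hball k (by omega))
    simp only [matPow]
    refine tsum_congr fun z => ?_
    rcases eq_zero_or_pos (matPow μ n x z) with h0 | h0
    · rw [ihn z, h0, zero_mul, zero_mul]
    · rw [ihn z, hA z (hball n (by omega) h0) y]

lemma isEdge_iff (hno : nonOrientedW μ) (z w : X) : IsEdgeW μ s(z,w) ↔ 0 < μ z w := by
  constructor
  · rintro ⟨a, b, he, hab⟩
    rw [Sym2.eq_iff] at he
    rcases he with ⟨rfl, rfl⟩ | ⟨rfl, rfl⟩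
    · exact hab
    · exact (hno z w).2 hab
  · exact fun h => ⟨z, w, rfl, h⟩

lemma percW_le (c : {e : Sym2 X // IsEdgeW μ e} → Bool) (x y : X) :
    percW μ c x y ≤ μ x y := by
  unfold percW
  split_ifs <;> simp

lemma percW_eq_of_open (c : {e : Sym2 X // IsEdgeW μ e} → Bool) {z w : X}
    (hc : ∀ (h : IsEdgeW μ s(z,w)), c ⟨s(z,w), h⟩ = true) : percW μ c z w = μ z w := by
  unfold percW
  by_cases h : IsEdgeW μ s(z,w)
  · simp [h, hc h]
  · simp only [h, dif_neg, not_false_iff]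
    by_contra h0
    exact h ⟨z, w, rfl, pos_iff_ne_zero.2 (fun hh => h0 hh.symm)⟩

/-- Edges incident to the ball of radius `< m` around `x`. -/
def edgeBallW (μ : X → X → ℝ≥0∞) (m : ℕ) (x : X) : Set {e : Sym2 X // IsEdgeW μ e} :=
  {e | ∃ z ∈ ballW μ m x, ∃ w, e.1 = s(z,w)}

lemma edgeBallW_finite (hno : nonOrientedW μ) (hbg : bddGeometryW μ) (m : ℕ) (x : X) :
    (edgeBallW μ m x).Finite := by
  obtain ⟨D, hD⟩ := hbg
  set A := ballW μ m x with hAdef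
  have hA : A.Finite := ballW_finite ⟨D, hD⟩ m x
  set P : Set (X × X) := ⋃ z ∈ A, (fun w => (z, w)) '' {w | 0 < μ z w} with hPdef
  have hP : P.Finite := Set.Finite.biUnion hA (fun z _ => Set.Finite.image _ (hD z).1)
  set U : Set (Sym2 X) := (fun p : X × X => s(p.1, p.2)) '' P with hUdef
  have hU : U.Finite := hP.image _
  apply Set.Finite.subset (hU.preimage (Set.injOn_of_injective Subtype.val_injective))
  rintro e ⟨z, hz, w, he⟩
  have hpos : 0 < μ z w := (isEdge_iff hno z w).1 (he ▸ e.2)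
  exact ⟨(z, w), Set.mem_biUnion hz ⟨w, hpos, rfl⟩, he.symm⟩

lemma matPow_percW_eq (c : {e : Sym2 X // IsEdgeW μ e} → Bool) {m : ℕ} {x : X}
    (hopen : ∀ e ∈ edgeBallW μ m x, c e = true) (y : X) :
    matPow (percW μ c) m x y = matPow μ m x y := by
  apply matPow_congr_on (percW_le c)
  · intro z hz w
    apply percW_eq_of_open
    intro h
    exact hopen ⟨s(z,w), h⟩ ⟨z, hz, w, rfl⟩
  · intro k hk
    intro z hz
    exact Set.mem_biUnion (Finset.mem_range.2 hk) hz

end Aux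

section BC

variable {Ω : Type*} [MeasureSpace Ω] [IsProbabilityMeasure (ℙ : Measure Ω)]

lemma borel_cantelli_open {E : Type*} (T : Set E) (hT : T.Finite)
    (Y : ℕ → Ω → E → Bool) (hmeas : ∀ n e, Measurable fun a => Y n a e)
    (p : ℕ → ℝ≥0∞) (hber : ∀ n e, ℙ {a | Y n a e = true} = p n)
    (hsum : ∑' n, (1 - p n) ≠ ⊤) :
    ∀ᵐ a ∂ℙ, ∀ᶠ n in atTop, ∀ e ∈ T, Y n a e = true := by
  set Bad : ℕ → Set Ω := fun n => ⋃ e ∈ T, {a | Y n a e = false} with hBad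
  have hfalse : ∀ n e, ℙ {a | Y n a e = false} = 1 - p n := by
    intro n e
    have hms : MeasurableSet {a : Ω | Y n a e = true} :=
      (hmeas n e) (measurableSet_singleton true)
    have hco : {a : Ω | Y n a e = false} = {a : Ω | Y n a e = true}ᶜ := by
      ext a; simp
    rw [hco, measure_compl hms (measure_ne_top _ _), measure_univ, hber]
  have hbound : ∀ n, ℙ (Bad n) ≤ ∑' _ : T, (1 - p n) := by
    intro n
    calc ℙ (Bad n) ≤ ∑' e : T, ℙ {a | Y n a e.1 = false} :=
          measure_biUnion_le ℙ hT.countable _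
      _ ≤ ∑' _ : T, (1 - p n) := ENNReal.tsum_le_tsum fun e => le_of_eq (hfalse n e.1)
  have htot : ∑' n, ℙ (Bad n) ≠ ⊤ := by
    have hle : ∑' n, ℙ (Bad n) ≤ ∑' (_ : T), ∑' n, (1 - p n) := by
      calc ∑' n, ℙ (Bad n) ≤ ∑' n, ∑' _ : T, (1 - p n) := ENNReal.tsum_le_tsum hbound
        _ = ∑' _ : T, ∑' n, (1 - p n) := ENNReal.tsum_comm
    refine ne_top_of_le_ne_top ?_ hle
    haveI := hT.fintype
    rw [tsum_fintype]
    exact (ENNReal.sum_lt_top.2 fun _ _ => hsum.lt_top).ne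
  filter_upwards [MeasureTheory.ae_eventually_notMem htot] with a ha
  filter_upwards [ha] with n hn e he
  by_contra hfe
  exact hn (Set.mem_biUnion he (show a ∈ {a | Y n a e = false} from by simpa using hfe))

end BC

/-- Theorem 7.1 (1): if `∑ (1 - pₙ) < ∞`, then the strong critical
parameters `λ_s(Y^a_n) = inf_x r_{ωₙ}(x)` of the Bernoulli(`pₙ`)-percolated graphs
converge almost surely to `R_μ = λ_s(X, μ)`. -/
theorem percolation_strong_critical_parameter_tendsto
    {X : Type*} [Countable X] [DecidableEq X]
    (μ : X → X → ℝ≥0∞) (hbdd : bddRows μ) (hconn : connectedW μ)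
    (hno : nonOrientedW μ) (hbg : bddGeometryW μ)
    (p : ℕ → ℝ≥0∞) (hp : ∀ n, p n ≤ 1) (hsum : ∑' n, (1 - p n) ≠ ⊤)
    {Ω : Type*} [MeasureSpace Ω] [IsProbabilityMeasure (ℙ : Measure Ω)]
    (Y : ℕ → Ω → {e : Sym2 X // IsEdgeW μ e} → Bool)
    (hmeas : ∀ n e, Measurable fun a => Y n a e)
    (hindep : iIndepFun
      (fun (ne : ℕ × {e : Sym2 X // IsEdgeW μ e}) a => Y ne.1 a ne.2) ℙ)
    (hber : ∀ n e, ℙ {a | Y n a e = true} = p n) :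
    ∀ᵐ a ∂ℙ, ∀ x y : X,
      Tendsto (fun n => ⨅ z : X, convR (percW μ (Y n a)) z z) atTop
        (nhds (convR μ x y)) := by
  obtain ⟨K, hKtop, hK⟩ := hbdd
  have hAE : ∀ᵐ a ∂ℙ, ∀ (x : X) (m : ℕ),
      ∀ᶠ n in atTop, ∀ e ∈ edgeBallW μ m x, Y n a e = true := by
    rw [ae_all_iff]
    intro x
    rw [ae_all_iff]
    intro m
    exact borel_cantelli_open _ (edgeBallW_finite hno hbg m x) Y hmeas p hber hsum
  filter_upwards [hAE] with a ha x y
  set L := lsRoot μ x x with hLdef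
  have hconst : ∀ z w : X, lsRoot μ z w = L := by
    intro z w
    apply le_antisymm
    · obtain ⟨a1, _, ha1'⟩ := hconn x z
      obtain ⟨b1, _, hb1'⟩ := hconn w x
      exact lsRoot_le_lsRoot hK ha1' hb1'
    · obtain ⟨a2, _, ha2'⟩ := hconn z x
      obtain ⟨b2, _, hb2'⟩ := hconn x w
      exact lsRoot_le_lsRoot hK ha2' hb2'
  have hgoal_val : convR μ x y = L⁻¹ := by
    unfold convR
    rw [hconst x y]
  rw [hgoal_val]
  set f : ℕ → ℝ≥0∞ := fun n => ⨅ z : X, convR (percW μ (Y n a)) z z with hfdef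
  have hlower : ∀ n, L⁻¹ ≤ f n := by
    intro n
    apply le_iInf
    intro z
    unfold convR
    rw [ENNReal.inv_le_inv, ← hconst z z]
    exact limsup_le_limsup (Eventually.of_forall fun k =>
      ENNReal.rpow_le_rpow (matPow_mono (percW_le _) k z z) (by positivity))
  rcases eq_or_ne L 0 with hL0 | hL0
  · have hft : ∀ n, f n = ⊤ := fun n => top_le_iff.1 (by simpa [hL0] using hlower n)
    have : f = fun _ => (⊤ : ℝ≥0∞) := funext hft
    rw [this, hL0, ENNReal.inv_zero]
    exact tendsto_const_nhds
  · have hupper : ∀ t, t < L → ∀ᶠ n in atTop, f n ≤ t⁻¹ := by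
      intro t htL
      have hfreq : ∃ᶠ m in atTop, t < matPow μ m x x ^ ((m:ℝ))⁻¹ :=
        frequently_lt_of_lt_limsup (by isBoundedDefault) htL
      obtain ⟨m, hmt, hm1⟩ := (hfreq.and_eventually (eventually_ge_atTop 1)).exists
      filter_upwards [ha x m] with n hn
      have hmp : matPow (percW μ (Y n a)) m x x = matPow μ m x x :=
        matPow_percW_eq _ hn x
      have hper : t ≤ lsRoot (percW μ (Y n a)) x x := by
        refine le_trans hmt.le ?_
        rw [← hmp]
        exact le_lsRoot x (by omega)
      calc f n ≤ convR (percW μ (Y n a)) x x := iInf_le _ x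
        _ ≤ t⁻¹ := ENNReal.inv_le_inv.2 hper
    have hLinvtop : L⁻¹ ≠ ⊤ := by
      simpa [ENNReal.inv_eq_top] using hL0
    rw [ENNReal.tendsto_nhds hLinvtop]
    intro ε hε
    have hLK : L ≤ K := lsRoot_le_K hK x x
    have hLtop : L ≠ ⊤ := ne_top_of_le_ne_top hKtop hLK
    set t := (L⁻¹ + ε)⁻¹ with htdef
    have htL : t < L := by
      have h1 : L⁻¹ < L⁻¹ + ε := ENNReal.lt_add_right hLinvtop hε.ne'
      have := ENNReal.inv_lt_inv.2 h1
      rwa [inv_inv] at this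
    filter_upwards [hupper t htL] with n hfn
    constructor
    · exact le_trans (tsub_le_self) (hlower n)
    · calc f n ≤ t⁻¹ := hfn
        _ = L⁻¹ + ε := by rw [htdef, inv_inv]
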